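/- Let p and q be unit quaternions and let r ≥ 0. Then the maximal displacement over the ball of radius r of the rotation associated with the quaternion p·(star q) equals 2·sin(ρ(p,q))·r; formally, sSup { ‖(p * star q) * v * star (p * star q) − v‖ : v a pure quaternion with ‖v‖ ≤ r } = 2 · Real.sin (Real.arccos |(p * star q).re|) · r, where (p * star q).re equals the Euclidean inner product ⟪p,q⟫ of p and q viewed as vectors in ℝ⁴. -/

import Mathlib

open Quaternion

private lemma norm_of_normSq {v : Quaternion ℝ} {r : ℝ} (hr : 0 ≤ r)
    (h : Quaternion.normSq v = r ^ 2) : ‖v‖ = r := by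
  have h2 := Quaternion.normSq_eq_norm_mul_self v
  nlinarith [norm_nonneg v]

private lemma anticomm {w v : Quaternion ℝ} (hw : w.re = 0) (hv : v.re = 0)
    (hdot : w.imI * v.imI + w.imJ * v.imJ + w.imK * v.imK = 0) :
    w * v = -(v * w) := by
  ext
  · simp only [Quaternion.re_mul, Quaternion.re_neg, hw, hv]
    ring_nf
    linarith
  · simp only [Quaternion.imI_mul, Quaternion.imI_neg, hw, hv]; ring
  · simp only [Quaternion.imJ_mul, Quaternion.imJ_neg, hw, hv]; ring
  · simp only [Quaternion.imK_mul, Quaternion.imK_neg, hw, hv]; ring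

private lemma key_eq (u v : Quaternion ℝ) (hu : ‖u‖ = 1) :
    u * v * star u - v = (u.im * v - v * u.im) * star u := by
  have h1 : u * star u = 1 := by
    rw [Quaternion.self_mul_star, Quaternion.normSq_eq_norm_mul_self, hu]
    norm_num
  have h2 : u.im * v - v * u.im = u * v - v * u := by
    conv_rhs => rw [← Quaternion.re_add_im u, add_mul, mul_add,
      Quaternion.coe_commutes]
    abel
  rw [h2, sub_mul, mul_assoc v u (star u), h1, mul_one]

theorem displacement_eq_two_sin_angular_dist
    (p q : Quaternion ℝ) (hp : ‖p‖ = 1) (hq : ‖q‖ = 1) (r : ℝ) (hr : 0 ≤ r) :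
    sSup { x : ℝ | ∃ v : Quaternion ℝ, v.re = 0 ∧ ‖v‖ ≤ r ∧
        x = ‖(p * star q) * v * star (p * star q) - v‖ } =
      2 * Real.sin (Real.arccos |(p * star q).re|) * r := by
  set u : Quaternion ℝ := p * star q with hu_def
  have hu : ‖u‖ = 1 := by
    rw [hu_def, norm_mul, Quaternion.norm_star, hp, hq]; norm_num
  -- the RHS equals 2 * ‖u.im‖ * r
  have hrhs : Real.sin (Real.arccos |u.re|) = ‖u.im‖ := by
    rw [Real.sin_arccos, sq_abs]
    have h1 : Quaternion.normSq u = 1 := by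
      rw [Quaternion.normSq_eq_norm_mul_self, hu]; norm_num
    have h2 : 1 - u.re ^ 2 = ‖u.im‖ ^ 2 := by
      have h3 := Quaternion.normSq_eq_norm_mul_self u.im
      have h4 : Quaternion.normSq u.im = u.imI ^ 2 + u.imJ ^ 2 + u.imK ^ 2 := by
        rw [Quaternion.normSq_def']; simp
      have h5 : Quaternion.normSq u = u.re ^ 2 + u.imI ^ 2 + u.imJ ^ 2 + u.imK ^ 2 :=
        Quaternion.normSq_def' u
      nlinarith
    rw [h2, Real.sqrt_sq (norm_nonneg _)]
  rw [hrhs]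
  -- upper bound
  have hub : ∀ x ∈ { x : ℝ | ∃ v : Quaternion ℝ, v.re = 0 ∧ ‖v‖ ≤ r ∧
      x = ‖u * v * star u - v‖ }, x ≤ 2 * ‖u.im‖ * r := by
    rintro x ⟨v, hv, hvr, rfl⟩
    rw [key_eq u v hu, norm_mul, Quaternion.norm_star, hu, mul_one]
    calc ‖u.im * v - v * u.im‖ ≤ ‖u.im * v‖ + ‖v * u.im‖ := norm_sub_le _ _
      _ = 2 * (‖u.im‖ * ‖v‖) := by rw [norm_mul, norm_mul]; ring
      _ ≤ 2 * (‖u.im‖ * r) := by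
          have := norm_nonneg u.im
          gcongr
      _ = 2 * ‖u.im‖ * r := by ring
  -- the bound is attained
  have hmem : (2 * ‖u.im‖ * r) ∈ { x : ℝ | ∃ v : Quaternion ℝ, v.re = 0 ∧ ‖v‖ ≤ r ∧
      x = ‖u * v * star u - v‖ } := by
    by_cases h0 : u.im = 0
    · refine ⟨0, rfl, by simpa using hr, ?_⟩
      simp [h0]
    · -- choose a pure v of norm r orthogonal to u.im
      obtain ⟨v, hvre, hvnorm, hdot⟩ :
          ∃ v : Quaternion ℝ, v.re = 0 ∧ ‖v‖ = r ∧
            u.im.imI * v.imI + u.im.imJ * v.imJ + u.im.imK * v.imK = 0 := by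
        by_cases hab : u.imI = 0 ∧ u.imJ = 0
        · refine ⟨⟨0, r, 0, 0⟩, rfl, ?_, by simp [hab.1]⟩
          apply norm_of_normSq hr
          erw [Quaternion.normSq_def']
          ring
        · set s : ℝ := Real.sqrt (u.imI ^ 2 + u.imJ ^ 2) with hs_def
          have hs2 : s ^ 2 = u.imI ^ 2 + u.imJ ^ 2 := by
            rw [hs_def, Real.sq_sqrt]; positivity
          have hspos : 0 < s := by
            rw [hs_def]
            apply Real.sqrt_pos.2
            rcases not_and_or.1 hab with h | h
            · positivity
            · positivity
          refine ⟨⟨0, -r * u.imJ / s, r * u.imI / s, 0⟩, rfl, ?_, ?_⟩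
          · apply norm_of_normSq hr
            erw [Quaternion.normSq_def']
            field_simp
            nlinarith [hs2]
          · simp only [Quaternion.imI_im, Quaternion.imJ_im, Quaternion.imK_im]
            field_simp
            ring
      refine ⟨v, hvre, le_of_eq hvnorm, ?_⟩
      rw [key_eq u v hu]
      have hac : u.im * v = -(v * u.im) := anticomm (Quaternion.re_im u) hvre hdot
      have : u.im * v - v * u.im = 2 * (u.im * v) := by
        rw [hac, two_mul]; abel
      rw [this, norm_mul, norm_mul, norm_mul, Quaternion.norm_star, hu, hvnorm]
      have h2 : ‖(2 : Quaternion ℝ)‖ = 2 := by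
        rw [show (2 : Quaternion ℝ) = ((2 : ℝ) : Quaternion ℝ) by norm_cast,
          Quaternion.norm_coe]
        norm_num
      rw [h2]; ring
  exact IsGreatest.csSup_eq ⟨hmem, hub⟩
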